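/- Let 𝔇 be a nonempty symmetric set of tournaments on X and let c* be a pseudo-balanced tournament on X. Then c* ∈ maj-cl(𝔇). -/

import Mathlib

open scoped BigOperators

variable {X : Type*}

/-- A tournament on `X`: irreflexive and, on distinct points, exactly one direction holds. -/
def IsTournament (R : X → X → Prop) : Prop :=
  (∀ x, ¬ R x x) ∧ ∀ x y : X, x ≠ y → (R x y ↔ ¬ R y x)

/-- Out-degree of `x` in the relation `R`. -/
noncomputable def valT (R : X → X → Prop) (x : X) : ℕ :=
  Set.ncard {y | R x y}

/-- A tournament is balanced if every out-degree equals `(n-1)/2`. -/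
def IsBalanced [Fintype X] (R : X → X → Prop) : Prop :=
  ∀ x : X, (valT R x : ℝ) = ((Fintype.card X : ℝ) - 1) / 2

/-- Action of a permutation on a relation. -/
def permAct (π : Equiv.Perm X) (R : X → X → Prop) : X → X → Prop :=
  fun x y => R (π.symm x) (π.symm y)

/-- A set of relations closed under the permutation action. -/
def SymmetricSet (D : Set (X → X → Prop)) : Prop :=
  ∀ (π : Equiv.Perm X), ∀ R ∈ D, permAct π R ∈ D

/-- The majority closure of a set of tournaments. -/
def majCl [Fintype X] (D : Set (X → X → Prop)) : Set (X → X → Prop) :=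
  {d | IsTournament d ∧ ∃ w : (X → X → Prop) → ℝ,
    (∀ c, 0 ≤ w c ∧ w c ≤ 1) ∧
    (∀ c, w c ≠ 0 → c ∈ D) ∧
    (Function.support w).Finite ∧
    (∑ᶠ c, w c) = 1 ∧
    ∀ x y : X, x ≠ y →
      (d x y ↔ 1 / 2 < ∑ᶠ c ∈ {c : X → X → Prop | c ∈ D ∧ c x y}, w c)}

open Classical in
noncomputable def tOf (d : X → X → Prop) : X → X → ℝ :=
  fun x y => if d x y then 1 else 0

/-- pr-cl: the convex hull of `{t[d] : d ∈ D}`. -/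
noncomputable def prCl (D : Set (X → X → Prop)) : Set (X → X → ℝ) :=
  convexHull ℝ (tOf '' D)

/-- `t` is a weighted tournament. -/
def IsWeighted (t : X → X → ℝ) : Prop :=
  ∀ x y : X, x ≠ y → 0 ≤ t x y ∧ t x y ≤ 1 ∧ t y x = 1 - t x y

/-- A weighted tournament is balanced if each row sums to `(n-1)/2`. -/
def BalancedW [Fintype X] (t : X → X → ℝ) : Prop :=
  ∀ x : X, (∑ᶠ y ∈ {y : X | y ≠ x}, t x y) = ((Fintype.card X : ℝ) - 1) / 2

/-- A tournament is pseudo-balanced if it is dominated by a balanced weighted tournament. -/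
def PseudoBalanced [Fintype X] (c : X → X → Prop) : Prop :=
  ∃ t : X → X → ℝ, IsWeighted t ∧ BalancedW t ∧
    ∀ x y : X, x ≠ y → c x y → 1 / 2 < t x y

open Classical in
noncomputable def tConfig (x y : X) (a s0 s1 : ℝ) : X → X → ℝ :=
  fun u v =>
    if u = v then 0
    else if u = x ∧ v = y then a
    else if u = y ∧ v = x then 1 - a
    else if u = x then s0
    else if v = x then 1 - s0
    else if u = y then s1
    else if v = y then 1 - s1
    else 1 / 2

/-- `Prd_ℓ(𝒟)`. -/
noncomputable def PrdL [Fintype X] (l : ℕ) (D : Set (X → X → Prop)) : Set (ℝ × ℝ) :=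
  {p | ∃ c ∈ D, ∃ x y : X, x ≠ y ∧ (c x y ↔ l = 1) ∧
    p.1 = (Set.ncard {z : X | z ≠ x ∧ z ≠ y ∧ c x z} : ℝ) / ((Fintype.card X : ℝ) - 2) ∧
    p.2 = (Set.ncard {z : X | z ≠ x ∧ z ≠ y ∧ c y z} : ℝ) / ((Fintype.card X : ℝ) - 2)}

/-- `Pr_A(𝒟)`. -/
noncomputable def PrA [Fintype X] (A : Set ℝ) (D : Set (X → X → Prop)) : Set (ℝ × ℝ) :=
  {p | 0 ≤ p.1 ∧ p.1 ≤ 1 ∧ 0 ≤ p.2 ∧ p.2 ≤ 1 ∧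
    ∃ x y : X, x ≠ y ∧ ∃ a ∈ A, tConfig x y a p.1 p.2 ∈ prCl D}

/-- `V_ℓ(d)` as a subset of `ℝ²`. -/
noncomputable def Vset [Fintype X] (l : ℕ) (d : X → X → Prop) : Set (ℝ × ℝ) :=
  {p | ∃ x y : X, x ≠ y ∧ (if l = 1 then d x y else d y x) ∧
    p = ((valT d x : ℝ), (valT d y : ℝ))}

/-- `V*_ℓ(d)`. -/
noncomputable def VstarSet [Fintype X] (l : ℕ) (d : X → X → Prop) : Set (ℝ × ℝ) :=
  {p | ∃ q ∈ Vset l d, p = (q.1 - (l : ℝ), q.2 - (1 - (l : ℝ)))}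

open Classical in
noncomputable def tCycle (k : ℕ) (xs : ℕ → X) (a : ℝ) : X → X → ℝ :=
  fun u v =>
    if u = v then 0
    else if ∃ i < k, u = xs i ∧ v = xs ((i + 1) % k) then a
    else if ∃ i < k, v = xs i ∧ u = xs ((i + 1) % k) then 1 - a
    else 1 / 2

open Classical in
noncomputable def tTriple (x y z : X) : X → X → ℝ :=
  fun u v =>
    if u = v then 0
    else if (u, v) = (x, y) ∨ (u, v) = (y, z) ∨ (u, v) = (z, x) then 1
    else if (u, v) = (y, x) ∨ (u, v) = (z, y) ∨ (u, v) = (x, z) then 0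
    else 1 / 2

/-- The dual (reverse) tournament. -/
def dualT (c : X → X → Prop) : X → X → Prop := fun x y => c y x

/-- The symmetric closure (orbit) of a single tournament. -/
def symCl (c : X → X → Prop) : Set (X → X → Prop) :=
  {d | ∃ π : Equiv.Perm X, d = permAct π c}
set_option linter.unusedSectionVars false

section Stmt17Aux

variable {X : Type*} [Fintype X]

open Finset Equiv

attribute [local instance] Classical.propDecidable

open Classical in
/-- Signed adjacency: `1` if `c0 u v`, `-1` if `c0 v u` (for a tournament), `0` diagonal. -/
noncomputable def aaT (c0 : X → X → Prop) : X → X → ℝ :=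
  fun u v => (if c0 u v then (1:ℝ) else 0) - (if c0 v u then (1:ℝ) else 0)

lemma aaT_skew (c0 : X → X → Prop) (u v : X) : aaT c0 u v = - aaT c0 v u := by
  simp only [aaT]; ring

lemma aaT_diag (c0 : X → X → Prop) (u : X) : aaT c0 u u = 0 := by
  simp [aaT]

lemma aaT_cases {c0 : X → X → Prop} (hc0 : IsTournament c0) {u v : X} (h : u ≠ v) :
    aaT c0 u v = 1 ∨ aaT c0 u v = -1 := by
  rcases (hc0.2 u v h) with hiff
  by_cases hc : c0 u v
  · left; simp [aaT, hc, hiff.mp hc]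
  · right
    have : c0 v u := by
      by_contra h'
      exact hc (hiff.mpr h')
    simp [aaT, hc, this]

lemma aaT_sq {c0 : X → X → Prop} (hc0 : IsTournament c0) {u v : X} (h : u ≠ v) :
    aaT c0 u v * aaT c0 u v = 1 := by
  rcases aaT_cases hc0 h with h1 | h1 <;> rw [h1] <;> norm_num

lemma aaT_abs {c0 : X → X → Prop} (u v : X) : |aaT c0 u v| ≤ 1 := by
  simp only [aaT]
  split_ifs <;> norm_num

/-- Reindexing a sum over permutations by right multiplication. -/
lemma sum_perm_mulRight (σ : Perm X) (f : Perm X → ℝ) :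
    ∑ τ : Perm X, f (τ * σ) = ∑ τ : Perm X, f τ :=
  Equiv.sum_comp (Equiv.mulRight σ) f

/-- 2-transitivity of the symmetric group. -/
lemma exists_perm_pair {x y u v : X} (hxy : x ≠ y) (huv : u ≠ v) :
    ∃ σ : Perm X, σ x = u ∧ σ y = v := by
  classical
  set σ₁ : Perm X := Equiv.swap x u with hσ₁
  have h1 : σ₁ x = u := Equiv.swap_apply_left x u
  refine ⟨(Equiv.swap (σ₁ y) v) * σ₁, ?_, ?_⟩
  · have hne1 : u ≠ σ₁ y := by
      rw [← h1]; exact fun h => hxy (σ₁.injective h)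
    simp only [Perm.mul_apply, h1]
    exact Equiv.swap_apply_of_ne_of_ne hne1 huv
  · simp only [Perm.mul_apply]
    exact Equiv.swap_apply_left _ v

/-- The sum of `g (τ u) (τ v)` over all permutations only depends on `u ≠ v`. -/
lemma sum_perm_pair_const {x y u v : X} (hxy : x ≠ y) (huv : u ≠ v) (g : X → X → ℝ) :
    ∑ τ : Perm X, g (τ u) (τ v) = ∑ τ : Perm X, g (τ x) (τ y) := by
  obtain ⟨σ, h1, h2⟩ := exists_perm_pair hxy huv
  rw [← sum_perm_mulRight σ (fun τ => g (τ x) (τ y))]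
  refine Finset.sum_congr rfl (fun τ _ => ?_)
  simp only [Perm.mul_apply, h1, h2]

lemma skew_sum_perm_zero {c0 : X → X → Prop} {s t : X} (hst : s ≠ t) :
    ∑ τ : Perm X, aaT c0 (τ s) (τ t) = 0 := by
  have h := sum_perm_mulRight (X := X) (Equiv.swap s t) (fun τ => aaT c0 (τ s) (τ t))
  have h2 : ∀ τ : Perm X, aaT c0 ((τ * Equiv.swap s t) s) ((τ * Equiv.swap s t) t)
      = - aaT c0 (τ s) (τ t) := by
    intro τ
    simp only [Perm.mul_apply, Equiv.swap_apply_left, Equiv.swap_apply_right]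
    exact aaT_skew c0 _ _
  rw [Finset.sum_congr rfl (fun τ _ => h2 τ), Finset.sum_neg_distrib] at h
  linarith [h]


/-- Row sums of the signed adjacency. -/
noncomputable def rrT (c0 : X → X → Prop) : X → ℝ := fun u => ∑ w, aaT c0 u w

/-- Sum of squared row sums. -/
noncomputable def QT (c0 : X → X → Prop) : ℝ := ∑ u, rrT c0 u * rrT c0 u

lemma sum_perm_pair_eq {x y : X} (hxy : x ≠ y) (g : X → X → ℝ) :
    ((Finset.univ : Finset X).offDiag.card : ℝ) * ∑ τ : Perm X, g (τ x) (τ y)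
      = (Nat.factorial (Fintype.card X) : ℝ) * ∑ p ∈ (Finset.univ : Finset X).offDiag, g p.1 p.2 := by
  classical
  have h1 : ∑ p ∈ (Finset.univ : Finset X).offDiag, (∑ τ : Perm X, g (τ p.1) (τ p.2))
      = ((Finset.univ : Finset X).offDiag.card : ℝ) * ∑ τ : Perm X, g (τ x) (τ y) := by
    rw [Finset.sum_congr rfl (fun p hp =>
      sum_perm_pair_const hxy (Finset.mem_offDiag.mp hp).2.2 g), Finset.sum_const,
      nsmul_eq_mul]
  have h2 : ∀ τ : Perm X, ∑ p ∈ (Finset.univ : Finset X).offDiag, g (τ p.1) (τ p.2)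
      = ∑ p ∈ (Finset.univ : Finset X).offDiag, g p.1 p.2 := by
    intro τ
    refine Finset.sum_nbij' (fun p => ((τ p.1 : X), (τ p.2 : X)))
      (fun p => ((τ⁻¹ p.1 : X), (τ⁻¹ p.2 : X))) ?_ ?_ ?_ ?_ ?_
    · intro p hp
      rcases Finset.mem_offDiag.mp hp with ⟨-, -, hne⟩
      exact Finset.mem_offDiag.mpr ⟨Finset.mem_univ _, Finset.mem_univ _,
        fun h => hne (τ.injective h)⟩
    · intro p hp
      rcases Finset.mem_offDiag.mp hp with ⟨-, -, hne⟩
      exact Finset.mem_offDiag.mpr ⟨Finset.mem_univ _, Finset.mem_univ _,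
        fun h => hne (τ⁻¹.injective h)⟩
    · intro p _; simp
    · intro p _; simp
    · intro p _; rfl
  rw [← h1, Finset.sum_comm]
  rw [Finset.sum_congr rfl (fun τ _ => h2 τ), Finset.sum_const, nsmul_eq_mul,
    Finset.card_univ, Fintype.card_perm]

lemma P_eq_Q {c0 : X → X → Prop} {x y : X} (hxy : x ≠ y) :
    ((Finset.univ : Finset X).offDiag.card : ℝ)
        * ∑ τ : Perm X, aaT c0 (τ x) (τ y) * rrT c0 (τ x)
      = (Nat.factorial (Fintype.card X) : ℝ) * QT c0 := by
  classical
  rw [sum_perm_pair_eq hxy (fun u v => aaT c0 u v * rrT c0 u)]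
  congr 1
  have hsub : (Finset.univ : Finset X).offDiag ⊆ Finset.univ ×ˢ Finset.univ := fun p _ =>
    Finset.mem_product.mpr ⟨Finset.mem_univ _, Finset.mem_univ _⟩
  have hzero : ∀ p ∈ Finset.univ ×ˢ Finset.univ, p ∉ (Finset.univ : Finset X).offDiag →
      aaT c0 p.1 p.2 * rrT c0 p.1 = 0 := by
    intro p _ hp
    have : p.1 = p.2 := by
      by_contra hne
      exact hp (Finset.mem_offDiag.mpr ⟨Finset.mem_univ _, Finset.mem_univ _, hne⟩)
    rw [this, aaT_diag, zero_mul]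
  rw [Finset.sum_subset hsub hzero, Finset.sum_product]
  unfold QT
  refine Finset.sum_congr rfl (fun u _ => ?_)
  simp only []
  rw [show (∑ v : X, aaT c0 (u, v).1 (u, v).2 * rrT c0 (u, v).1)
      = (∑ v : X, aaT c0 u v) * rrT c0 u from by rw [Finset.sum_mul]]
  rfl

/-- The finset of pairwise-distinct triples. -/
noncomputable def tripleT (X : Type*) [Fintype X] : Finset (X × X × X) :=
  letI := Classical.decEq X
  (Finset.univ : Finset (X × X × X)).filter
    (fun p => p.1 ≠ p.2.1 ∧ p.1 ≠ p.2.2 ∧ p.2.1 ≠ p.2.2)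

lemma sum_tripleT (f : X → X → X → ℝ) :
    ∑ p ∈ tripleT X, f p.1 p.2.1 p.2.2
      = ∑ u, ∑ v ∈ Finset.univ.erase u, ∑ w ∈ (Finset.univ.erase u).erase v, f u v w := by
  classical
  have he1 : ∀ u : X, (Finset.univ.erase u : Finset X)
      = Finset.univ.filter (fun v => v ≠ u) := fun u => (Finset.filter_ne' _ _).symm
  have he2 : ∀ u v : X, ((Finset.univ.erase u).erase v : Finset X)
      = Finset.univ.filter (fun w => w ≠ u ∧ w ≠ v) := by
    intro u v
    rw [he1 u, ← Finset.filter_ne' (Finset.univ.filter (fun w => w ≠ u)) v,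
      Finset.filter_filter]
  rw [tripleT]
  rw [Finset.sum_filter, Fintype.sum_prod_type]
  refine Finset.sum_congr rfl (fun u _ => ?_)
  rw [Fintype.sum_prod_type]
  have hinner : ∀ v : X, (∑ w ∈ (Finset.univ.erase u).erase v, f u v w)
      = ∑ w, if w ≠ u ∧ w ≠ v then f u v w else 0 := by
    intro v
    rw [he2 u v, Finset.sum_filter]
  rw [Finset.sum_congr rfl (fun v _ => hinner v), he1 u, Finset.sum_filter]
  refine Finset.sum_congr rfl (fun v _ => ?_)
  by_cases hvu : v = u
  · subst hvu
    simp
  · simp only [Ne, hvu, not_false_iff, if_true]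
    refine Finset.sum_congr rfl (fun w _ => ?_)
    by_cases h2 : w = u <;> by_cases h3 : w = v <;> simp_all [eq_comm]

lemma rot_mem_tripleT {p : X × X × X} (hp : p ∈ tripleT X) :
    (p.2.1, p.2.2, p.1) ∈ tripleT X := by
  classical
  rw [tripleT] at *
  rcases Finset.mem_filter.mp hp with ⟨-, h1, h2, h3⟩
  exact Finset.mem_filter.mpr ⟨Finset.mem_univ _, h3, fun h => h1 h.symm, fun h => h2 h.symm⟩

lemma sum_rot_tripleT (f : X × X × X → ℝ) :
    ∑ p ∈ tripleT X, f (p.2.1, p.2.2, p.1) = ∑ p ∈ tripleT X, f p := by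
  classical
  refine Finset.sum_nbij' (fun p => (p.2.1, p.2.2, p.1)) (fun p => (p.2.2, p.1, p.2.1))
    (fun p hp => rot_mem_tripleT hp) (fun p hp => rot_mem_tripleT (rot_mem_tripleT hp))
    (fun p _ => rfl) (fun p _ => rfl) (fun p _ => rfl)

lemma card_tripleT_real (hcard : 3 ≤ Fintype.card X) :
    (((tripleT X).card : ℝ))
      = (Fintype.card X : ℝ) * ((Fintype.card X : ℝ) - 1) * ((Fintype.card X : ℝ) - 2) := by
  classical
  have h := sum_tripleT (X := X) (fun _ _ _ => (1 : ℝ))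
  rw [Finset.sum_const, nsmul_eq_mul, mul_one] at h
  have hcards : ∀ u : X, ∀ v ∈ Finset.univ.erase u,
      ∑ _w ∈ (Finset.univ.erase u).erase v, (1:ℝ) = (Fintype.card X : ℝ) - 2 := by
    intro u v hv
    rw [Finset.sum_const, nsmul_eq_mul, mul_one, Finset.card_erase_of_mem hv,
      Finset.card_erase_of_mem (Finset.mem_univ u), Finset.card_univ]
    rw [Nat.cast_sub (by omega), Nat.cast_sub (by omega)]
    push_cast
    ring
  rw [h]
  rw [Finset.sum_congr rfl (fun u _ => Finset.sum_congr rfl (fun v hv => hcards u v hv))]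
  rw [Finset.sum_congr rfl (fun u _ => by
    rw [Finset.sum_const, nsmul_eq_mul, Finset.card_erase_of_mem (Finset.mem_univ u),
      Finset.card_univ])]
  rw [Finset.sum_const, nsmul_eq_mul, Finset.card_univ]
  rw [Nat.cast_sub (by omega)]
  push_cast
  ring

lemma triple_bound {c0 : X → X → Prop} (hc0 : IsTournament c0) {u v w : X}
    (h1 : u ≠ v) (h2 : u ≠ w) (h3 : v ≠ w) :
    aaT c0 u v * aaT c0 u w + aaT c0 v w * aaT c0 v u + aaT c0 w u * aaT c0 w v ≤ 1 := by
  rw [show aaT c0 v u = - aaT c0 u v from aaT_skew c0 v u,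
    show aaT c0 w u = - aaT c0 u w from aaT_skew c0 w u,
    show aaT c0 w v = - aaT c0 v w from aaT_skew c0 w v]
  rcases aaT_cases hc0 h1 with ha | ha <;> rcases aaT_cases hc0 h2 with hb | hb <;>
    rcases aaT_cases hc0 h3 with hg | hg <;> rw [ha, hb, hg] <;> norm_num

lemma QT_le {c0 : X → X → Prop} (hc0 : IsTournament c0) (hcard : 3 ≤ Fintype.card X) :
    3 * QT c0 ≤ (Fintype.card X : ℝ) * ((Fintype.card X : ℝ) - 1)
      * ((Fintype.card X : ℝ) + 1) := by
  classical
  set n : ℝ := (Fintype.card X : ℝ) with hn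
  set E : ℝ := ∑ p ∈ tripleT X, aaT c0 p.1 p.2.1 * aaT c0 p.1 p.2.2 with hE
  have hQ : QT c0 = n * (n - 1) + E := by
    have hrr : ∀ u : X, rrT c0 u * rrT c0 u
        = ((Fintype.card X : ℝ) - 1)
          + ∑ v ∈ Finset.univ.erase u, ∑ w ∈ (Finset.univ.erase u).erase v,
              aaT c0 u v * aaT c0 u w := by
      intro u
      have h0 : rrT c0 u = ∑ v ∈ Finset.univ.erase u, aaT c0 u v :=
        (Finset.sum_erase _ (aaT_diag c0 u)).symm
      rw [h0, Finset.sum_mul_sum]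
      have : ∀ v ∈ Finset.univ.erase u,
          ∑ w ∈ Finset.univ.erase u, aaT c0 u v * aaT c0 u w
            = 1 + ∑ w ∈ (Finset.univ.erase u).erase v, aaT c0 u v * aaT c0 u w := by
        intro v hv
        rw [← Finset.add_sum_erase _ _ hv,
          aaT_sq hc0 (Finset.ne_of_mem_erase hv).symm ]
      rw [Finset.sum_congr rfl this, Finset.sum_add_distrib, Finset.sum_const,
        nsmul_eq_mul, mul_one, Finset.card_erase_of_mem (Finset.mem_univ u),
        Finset.card_univ, Nat.cast_sub (by omega)]
      push_cast
      ring_nf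
    rw [QT, Finset.sum_congr rfl (fun u _ => hrr u), Finset.sum_add_distrib,
      Finset.sum_const, nsmul_eq_mul, Finset.card_univ, hE,
      sum_tripleT (fun u v w => aaT c0 u v * aaT c0 u w)]
  have hEbound : 3 * E ≤ n * (n - 1) * (n - 2) := by
    have hrot1 : E = ∑ p ∈ tripleT X, aaT c0 p.2.1 p.2.2 * aaT c0 p.2.1 p.1 := by
      rw [hE, ← sum_rot_tripleT (fun p => aaT c0 p.1 p.2.1 * aaT c0 p.1 p.2.2)]
    have hrot2 : E = ∑ p ∈ tripleT X, aaT c0 p.2.2 p.1 * aaT c0 p.2.2 p.2.1 := by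
      rw [hrot1, ← sum_rot_tripleT (fun p => aaT c0 p.2.1 p.2.2 * aaT c0 p.2.1 p.1)]
    have h3E : 3 * E = ∑ p ∈ tripleT X,
        (aaT c0 p.1 p.2.1 * aaT c0 p.1 p.2.2 + aaT c0 p.2.1 p.2.2 * aaT c0 p.2.1 p.1
          + aaT c0 p.2.2 p.1 * aaT c0 p.2.2 p.2.1) := by
      rw [Finset.sum_add_distrib, Finset.sum_add_distrib, ← hE, ← hrot1, ← hrot2]
      ring
    have hle : ∑ p ∈ tripleT X,
        (aaT c0 p.1 p.2.1 * aaT c0 p.1 p.2.2 + aaT c0 p.2.1 p.2.2 * aaT c0 p.2.1 p.1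
          + aaT c0 p.2.2 p.1 * aaT c0 p.2.2 p.2.1) ≤ ∑ _p ∈ tripleT X, (1:ℝ) := by
      refine Finset.sum_le_sum (fun p hp => ?_)
      classical
      rw [tripleT] at hp
      rcases Finset.mem_filter.mp hp with ⟨-, h1, h2, h3⟩
      exact triple_bound hc0 h1 h2 h3
    rw [Finset.sum_const, nsmul_eq_mul, mul_one] at hle
    rw [h3E]
    calc _ ≤ (((tripleT X).card : ℝ)) := hle
      _ = n * (n-1) * (n-2) := card_tripleT_real hcard
  rw [hQ]
  nlinarith [hEbound]

lemma sum_split {x y : X} (hxy : x ≠ y) (f : X → ℝ) :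
    ∑ s, f s = f x + f y + ∑ s ∈ (Finset.univ.erase x).erase y, f s := by
  classical
  rw [← Finset.add_sum_erase _ f (Finset.mem_univ x),
    ← Finset.add_sum_erase _ f (Finset.mem_erase.mpr ⟨hxy.symm, Finset.mem_univ y⟩),
    ← add_assoc]

/-- The correlation kernel. -/
noncomputable def CCt (c0 : X → X → Prop) (x y s t : X) : ℝ :=
  ∑ τ : Perm X, aaT c0 (τ s) (τ t) * aaT c0 (τ x) (τ y)

lemma CCt_reindex (c0 : X → X → Prop) (x y : X) (σ : Perm X) (s t : X) :
    CCt c0 x y s t = ∑ τ : Perm X,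
      aaT c0 (τ (σ s)) (τ (σ t)) * aaT c0 (τ (σ x)) (τ (σ y)) := by
  rw [CCt, ← sum_perm_mulRight σ
    (fun τ => aaT c0 (τ s) (τ t) * aaT c0 (τ x) (τ y))]
  rfl

lemma CCt_diag (c0 : X → X → Prop) (x y s : X) : CCt c0 x y s s = 0 := by
  rw [CCt]
  simp [aaT_diag]

lemma CCt_xy {c0 : X → X → Prop} (hc0 : IsTournament c0) {x y : X} (hxy : x ≠ y) :
    CCt c0 x y x y = (Nat.factorial (Fintype.card X) : ℝ) := by
  rw [CCt, Finset.sum_congr rfl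
    (fun τ _ => aaT_sq hc0 (fun h => hxy (τ.injective h))), Finset.sum_const,
    nsmul_eq_mul, mul_one, Finset.card_univ, Fintype.card_perm]

lemma CCt_yx {c0 : X → X → Prop} (hc0 : IsTournament c0) {x y : X} (hxy : x ≠ y) :
    CCt c0 x y y x = -(Nat.factorial (Fintype.card X) : ℝ) := by
  have h : ∀ τ : Perm X, aaT c0 (τ y) (τ x) * aaT c0 (τ x) (τ y) = -1 := by
    intro τ
    rw [show aaT c0 (τ y) (τ x) = - aaT c0 (τ x) (τ y) from aaT_skew c0 _ _, neg_mul,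
      aaT_sq hc0 (fun h => hxy (τ.injective h))]
  rw [CCt, Finset.sum_congr rfl (fun τ _ => h τ), Finset.sum_const, nsmul_eq_mul,
    mul_neg_one, Finset.card_univ, Fintype.card_perm]

lemma CCt_tx {c0 : X → X → Prop} (x y t : X) :
    CCt c0 x y t x = - CCt c0 x y x t := by
  rw [CCt, CCt, ← Finset.sum_neg_distrib]
  refine Finset.sum_congr rfl (fun τ _ => ?_)
  rw [show aaT c0 (τ t) (τ x) = - aaT c0 (τ x) (τ t) from aaT_skew c0 _ _]
  ring

lemma CCt_far {c0 : X → X → Prop} {x y s t : X} (hsx : s ≠ x) (hsy : s ≠ y)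
    (htx : t ≠ x) (hty : t ≠ y) (hst : s ≠ t) : CCt c0 x y s t = 0 := by
  have h := CCt_reindex c0 x y (Equiv.swap s t) s t
  rw [Equiv.swap_apply_left, Equiv.swap_apply_right,
    Equiv.swap_apply_of_ne_of_ne (fun h => hsx h.symm) (fun h => htx h.symm),
    Equiv.swap_apply_of_ne_of_ne (fun h => hsy h.symm) (fun h => hty h.symm)] at h
  have h2 : ∑ τ : Perm X, aaT c0 (τ t) (τ s) * aaT c0 (τ x) (τ y)
      = - CCt c0 x y s t := by
    rw [CCt, ← Finset.sum_neg_distrib]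
    refine Finset.sum_congr rfl (fun τ _ => ?_)
    rw [show aaT c0 (τ t) (τ s) = - aaT c0 (τ s) (τ t) from aaT_skew c0 _ _]
    ring
  rw [h2] at h
  linarith

lemma CCt_const {c0 : X → X → Prop} {x y t t' : X} (htx : t ≠ x) (hty : t ≠ y)
    (htx' : t' ≠ x) (hty' : t' ≠ y) : CCt c0 x y x t = CCt c0 x y x t' := by
  rcases eq_or_ne t t' with rfl | hne
  · rfl
  · have h := CCt_reindex c0 x y (Equiv.swap t t') x t
    rw [Equiv.swap_apply_left,
      Equiv.swap_apply_of_ne_of_ne (fun h => htx h.symm) (fun h => htx' h.symm),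
      Equiv.swap_apply_of_ne_of_ne (fun h => hty h.symm) (fun h => hty' h.symm)] at h
    rw [h, CCt]

lemma CCt_ty {c0 : X → X → Prop} {x y t : X} (htx : t ≠ x) (hty : t ≠ y) :
    CCt c0 x y t y = CCt c0 x y x t := by
  have h := CCt_reindex c0 x y (Equiv.swap x y) t y
  rw [Equiv.swap_apply_left, Equiv.swap_apply_right,
    Equiv.swap_apply_of_ne_of_ne htx hty] at h
  rw [h, CCt]
  refine Finset.sum_congr rfl (fun τ _ => ?_)
  rw [show aaT c0 (τ t) (τ x) = - aaT c0 (τ x) (τ t) from aaT_skew c0 _ _,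
    show aaT c0 (τ y) (τ x) = - aaT c0 (τ x) (τ y) from aaT_skew c0 _ _]
  ring

lemma CCt_yt {c0 : X → X → Prop} {x y t : X} (htx : t ≠ x) (hty : t ≠ y) :
    CCt c0 x y y t = - CCt c0 x y x t := by
  have h := CCt_reindex c0 x y (Equiv.swap x y) y t
  rw [Equiv.swap_apply_left, Equiv.swap_apply_right,
    Equiv.swap_apply_of_ne_of_ne htx hty] at h
  rw [h, CCt, ← Finset.sum_neg_distrib]
  refine Finset.sum_congr rfl (fun τ _ => ?_)
  rw [show aaT c0 (τ y) (τ x) = - aaT c0 (τ x) (τ y) from aaT_skew c0 _ _]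
  ring

lemma sum_CC_U2 {c0 : X → X → Prop} (hc0 : IsTournament c0) {x y : X} (hxy : x ≠ y) :
    ∑ t ∈ (Finset.univ.erase x).erase y, CCt c0 x y x t
      = (∑ τ : Perm X, aaT c0 (τ x) (τ y) * rrT c0 (τ x))
        - (Nat.factorial (Fintype.card X) : ℝ) := by
  classical
  have hswap : ∑ t ∈ (Finset.univ.erase x).erase y, CCt c0 x y x t
      = ∑ τ : Perm X, ∑ t ∈ (Finset.univ.erase x).erase y,
          aaT c0 (τ x) (τ t) * aaT c0 (τ x) (τ y) := by
    simp only [CCt]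
    rw [Finset.sum_comm]
  have hinner : ∀ τ : Perm X, ∑ t ∈ (Finset.univ.erase x).erase y,
      aaT c0 (τ x) (τ t) * aaT c0 (τ x) (τ y)
        = (rrT c0 (τ x) - aaT c0 (τ x) (τ y)) * aaT c0 (τ x) (τ y) := by
    intro τ
    rw [← Finset.sum_mul]
    congr 1
    have hfull : ∑ t : X, aaT c0 (τ x) (τ t) = rrT c0 (τ x) :=
      Equiv.sum_comp τ (fun w => aaT c0 (τ x) w)
    have hsplit := sum_split hxy (fun t => aaT c0 (τ x) (τ t))
    rw [hfull, aaT_diag] at hsplit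
    linarith
  rw [hswap, Finset.sum_congr rfl (fun τ _ => hinner τ)]
  have : ∀ τ : Perm X, (rrT c0 (τ x) - aaT c0 (τ x) (τ y)) * aaT c0 (τ x) (τ y)
      = aaT c0 (τ x) (τ y) * rrT c0 (τ x) - 1 := by
    intro τ
    have := aaT_sq hc0 (fun h => hxy (τ.injective h))
    nlinarith [this]
  rw [Finset.sum_congr rfl (fun τ _ => this τ), Finset.sum_sub_distrib,
    Finset.sum_const, nsmul_eq_mul, mul_one, Finset.card_univ, Fintype.card_perm]

set_option maxHeartbeats 1000000 in
lemma R_formula {c0 : X → X → Prop} (hc0 : IsTournament c0)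
    (hcard : 3 ≤ Fintype.card X) (G : X → X → ℝ) (hGskew : ∀ s t, G s t = - G t s)
    (hGrow : ∀ s, ∑ t, G s t = 0) {x y : X} (hxy : x ≠ y) :
    ∃ K : ℝ, 0 < K ∧
      ∑ τ : Perm X, (∑ s, ∑ t, G s t * aaT c0 (τ s) (τ t)) * aaT c0 (τ x) (τ y)
        = K * G x y := by
  classical
  set nf : ℝ := (Nat.factorial (Fintype.card X) : ℝ) with hnf
  set U2 : Finset X := (Finset.univ.erase x).erase y with hU2
  have hGdiag : ∀ s : X, G s s = 0 := fun s => by have := hGskew s s; linarith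
  -- step 1: swap the sums
  have hstep1 : ∑ τ : Perm X, (∑ s, ∑ t, G s t * aaT c0 (τ s) (τ t)) * aaT c0 (τ x) (τ y)
      = ∑ s, ∑ t, G s t * CCt c0 x y s t := by
    have h1 : ∀ τ : Perm X,
        (∑ s, ∑ t, G s t * aaT c0 (τ s) (τ t)) * aaT c0 (τ x) (τ y)
          = ∑ s, ∑ t, G s t * (aaT c0 (τ s) (τ t) * aaT c0 (τ x) (τ y)) := by
      intro τ
      rw [Finset.sum_mul]
      refine Finset.sum_congr rfl (fun s _ => ?_)
      rw [Finset.sum_mul]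
      refine Finset.sum_congr rfl (fun t _ => ?_)
      ring
    rw [Finset.sum_congr rfl (fun τ _ => h1 τ), Finset.sum_comm]
    refine Finset.sum_congr rfl (fun s _ => ?_)
    rw [Finset.sum_comm]
    refine Finset.sum_congr rfl (fun t _ => ?_)
    rw [CCt, Finset.mul_sum]
  -- membership facts for U2
  have hmemU2 : ∀ t ∈ U2, t ≠ x ∧ t ≠ y := by
    intro t ht
    rw [hU2] at ht
    rcases Finset.mem_erase.mp ht with ⟨hty, ht'⟩
    exact ⟨(Finset.mem_erase.mp ht').1, hty⟩
  -- U2 is nonempty and has card n - 2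
  have hyU2 : y ∈ Finset.univ.erase x := Finset.mem_erase.mpr ⟨hxy.symm, Finset.mem_univ y⟩
  have hcardU2 : U2.card = Fintype.card X - 2 := by
    rw [hU2, Finset.card_erase_of_mem hyU2, Finset.card_erase_of_mem (Finset.mem_univ x),
      Finset.card_univ]
    omega
  have hU2ne : U2.Nonempty := by
    rw [← Finset.card_pos, hcardU2]
    omega
  obtain ⟨t₀, ht₀⟩ := hU2ne
  obtain ⟨ht₀x, ht₀y⟩ := hmemU2 t₀ ht₀
  set c3 : ℝ := CCt c0 x y x t₀ with hc3
  have hc3t : ∀ t ∈ U2, CCt c0 x y x t = c3 := by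
    intro t ht
    obtain ⟨htx, hty⟩ := hmemU2 t ht
    exact CCt_const htx hty ht₀x ht₀y
  -- row sums of G over U2
  have hrowx : ∑ t ∈ U2, G x t = - G x y := by
    have := sum_split hxy (fun t => G x t)
    rw [hGrow x, hGdiag x] at this
    linarith
  have hrowy : ∑ t ∈ U2, G y t = G x y := by
    have := sum_split hxy (fun t => G y t)
    rw [hGrow y, hGdiag y] at this
    have hyx : G y x = - G x y := by rw [hGskew y x]
    linarith
  -- inner sums
  have hIx : ∑ t, G x t * CCt c0 x y x t = nf * G x y - c3 * G x y := by
    rw [sum_split hxy (fun t => G x t * CCt c0 x y x t)]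
    rw [hGdiag x, zero_mul, CCt_xy hc0 hxy]
    rw [Finset.sum_congr rfl (fun t ht => by rw [hc3t t ht]), ← Finset.sum_mul, hrowx]
    ring
  have hIy : ∑ t, G y t * CCt c0 x y y t = nf * G x y - c3 * G x y := by
    rw [sum_split hxy (fun t => G y t * CCt c0 x y y t)]
    rw [CCt_diag, mul_zero, CCt_yx hc0 hxy]
    have : ∀ t ∈ U2, G y t * CCt c0 x y y t = G y t * (-c3) := by
      intro t ht
      obtain ⟨htx, hty⟩ := hmemU2 t ht
      rw [CCt_yt htx hty, hc3t t ht]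
    rw [Finset.sum_congr rfl this, ← Finset.sum_mul, hrowy]
    have hyx : G y x = - G x y := by rw [hGskew y x]
    rw [hyx]
    ring
  have hIs : ∀ s ∈ U2, ∑ t, G s t * CCt c0 x y s t
      = - G s x * c3 + G s y * c3 := by
    intro s hs
    obtain ⟨hsx, hsy⟩ := hmemU2 s hs
    rw [sum_split hxy (fun t => G s t * CCt c0 x y s t)]
    have hz : ∀ t ∈ U2, G s t * CCt c0 x y s t = 0 := by
      intro t ht
      obtain ⟨htx, hty⟩ := hmemU2 t ht
      rcases eq_or_ne s t with rfl | hst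
      · rw [CCt_diag, mul_zero]
      · rw [CCt_far hsx hsy htx hty hst, mul_zero]
    rw [Finset.sum_congr rfl hz, Finset.sum_const, smul_zero, CCt_tx,
      CCt_ty hsx hsy, hc3t s hs]
    ring
  -- assemble R
  have hR : ∑ s, ∑ t, G s t * CCt c0 x y s t = (2 * nf - 4 * c3) * G x y := by
    rw [sum_split hxy (fun s => ∑ t, G s t * CCt c0 x y s t), hIx, hIy,
      Finset.sum_congr rfl hIs]
    have h1 : ∑ s ∈ U2, (- G s x * c3 + G s y * c3)
        = - (∑ s ∈ U2, G s x) * c3 + (∑ s ∈ U2, G s y) * c3 := by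
      rw [Finset.sum_add_distrib, ← Finset.sum_mul, ← Finset.sum_mul,
        Finset.sum_neg_distrib, neg_mul]
    have h2 : ∑ s ∈ U2, G s x = G x y := by
      have : ∀ s ∈ U2, G s x = - G x s := fun s _ => hGskew s x
      rw [Finset.sum_congr rfl this, Finset.sum_neg_distrib, hrowx, neg_neg]
    have h3 : ∑ s ∈ U2, G s y = - G x y := by
      have : ∀ s ∈ U2, G s y = - G y s := fun s _ => hGskew s y
      rw [Finset.sum_congr rfl this, Finset.sum_neg_distrib, hrowy]
    rw [h1, h2, h3]
    ring
  -- bound on c3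
  have hcast2 : (2:ℕ) ≤ Fintype.card X := by omega
  have hn3 : (3:ℝ) ≤ (Fintype.card X : ℝ) := by exact_mod_cast hcard
  have hnfpos : 0 < nf := by
    rw [hnf]
    exact_mod_cast Nat.factorial_pos _
  have hc3lt : c3 < nf / 2 := by
    set n : ℝ := (Fintype.card X : ℝ) with hnn
    have hPQ := P_eq_Q (c0 := c0) hxy
    have hoffcard : (((Finset.univ : Finset X).offDiag.card : ℝ)) = n * (n - 1) := by
      rw [Finset.offDiag_card, Finset.card_univ]
      rw [Nat.cast_sub (Nat.le_mul_of_pos_left _ (by omega))]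
      push_cast
      ring
    have hQle := QT_le hc0 hcard
    set P : ℝ := ∑ τ : Perm X, aaT c0 (τ x) (τ y) * rrT c0 (τ x) with hP
    have hPeq : n * (n - 1) * P = nf * QT c0 := by
      rw [← hoffcard, hPQ, hnf]
    have hsum : ∑ t ∈ U2, CCt c0 x y x t = P - nf := by
      rw [hP, hnf, hU2]
      exact sum_CC_U2 hc0 hxy
    have hconst : ∑ t ∈ U2, CCt c0 x y x t = ((U2.card : ℕ) : ℝ) * c3 := by
      rw [Finset.sum_congr rfl hc3t, Finset.sum_const, nsmul_eq_mul]
    have hn2 : ((Fintype.card X - 2 : ℕ) : ℝ) = n - 2 := by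
      rw [Nat.cast_sub hcast2]
      push_cast
      ring
    have hc3eq : (n - 2) * c3 = P - nf := by
      rw [← hn2, ← hcardU2, ← hconst, hsum]
    rw [← hnn] at hQle
    clear_value P n
    -- P < nf * n / 2
    have hPlt : P < nf * n / 2 := by
      have hpos : 0 < n * (n - 1) := by nlinarith
      have h1 : n * (n - 1) * (3 * P) ≤ n * (n - 1) * (nf * (n + 1)) := by
        nlinarith [hPeq, hQle, hnfpos]
      have h3P : 3 * P ≤ nf * (n + 1) := le_of_mul_le_mul_left h1 hpos
      nlinarith [h3P, mul_pos hnfpos (show (0:ℝ) < n - 2 by linarith)]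
    nlinarith [hc3eq, hPlt, show (0:ℝ) < n - 2 by linarith]
  refine ⟨2 * nf - 4 * c3, by linarith, ?_⟩
  exact hstep1.trans hR


end Stmt17Aux
open Equiv in
set_option maxHeartbeats 1000000 in
theorem stmt17 [Fintype X] (hcard : 3 ≤ Fintype.card X)
    (D : Set (X → X → Prop)) (hne : D.Nonempty) (hT : ∀ c ∈ D, IsTournament c)
    (hsym : SymmetricSet D)
    (c : X → X → Prop) (hc : IsTournament c) (hpb : PseudoBalanced c) :
    c ∈ majCl D := by
  classical
  obtain ⟨c0, hc0D⟩ := hne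
  have hc0 : IsTournament c0 := hT c0 hc0D
  obtain ⟨ts, hWt, hBt, hdom⟩ := hpb
  have hn3 : (3:ℝ) ≤ (Fintype.card X : ℝ) := by exact_mod_cast hcard
  set nf : ℝ := (Nat.factorial (Fintype.card X) : ℝ) with hnf
  have hnfpos : 0 < nf := by rw [hnf]; exact_mod_cast Nat.factorial_pos _
  -- the skew matrix of the balanced weighted tournament
  set G : X → X → ℝ := fun s t => if s = t then 0 else ts s t - ts t s with hG
  have hGdef : ∀ s t : X, s ≠ t → G s t = ts s t - ts t s := by
    intro s t h; simp only [hG, if_neg h]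
  have hGskew : ∀ s t : X, G s t = - G t s := by
    intro s t
    rcases eq_or_ne s t with rfl | hst
    · simp [hG]
    · rw [hGdef s t hst, hGdef t s hst.symm]; ring
  have hGbd : ∀ s t : X, |G s t| ≤ 1 := by
    intro s t
    rcases eq_or_ne s t with rfl | hst
    · simp [hG]
    · obtain ⟨h0, h1, -⟩ := hWt s t hst
      obtain ⟨h0', h1', -⟩ := hWt t s hst.symm
      rw [hGdef s t hst, abs_le]
      constructor <;> linarith
  have hGrow : ∀ s : X, ∑ t, G s t = 0 := by
    intro s
    have hb : ∑ t ∈ Finset.univ.erase s, ts s t = ((Fintype.card X : ℝ) - 1)/2 := by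
      have hset : {y : X | y ≠ s} = ↑(Finset.univ.erase s) := by
        ext z; simp [Finset.mem_erase]
      have := hBt s
      rw [hset, finsum_mem_coe_finset] at this
      exact this
    have hsum : ∑ t, G s t = ∑ t ∈ Finset.univ.erase s, G s t :=
      (Finset.sum_erase _ (by simp [hG])).symm
    have hterm : ∀ t ∈ Finset.univ.erase s, G s t = 2 * ts s t - 1 := by
      intro t ht
      have hts : t ≠ s := (Finset.mem_erase.mp ht).1
      have h2 := (hWt s t hts.symm).2.2
      rw [hGdef s t hts.symm, h2]
      ring
    rw [hsum, Finset.sum_congr rfl hterm, Finset.sum_sub_distrib, ← Finset.mul_sum, hb,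
      Finset.sum_const, nsmul_eq_mul, mul_one, Finset.card_erase_of_mem (Finset.mem_univ s),
      Finset.card_univ, Nat.cast_sub (by omega)]
    push_cast
    ring
  have hGpos : ∀ x y : X, x ≠ y → (c x y ↔ 0 < G x y) := by
    intro x y hxy
    constructor
    · intro hcxy
      have h1 := hdom x y hxy hcxy
      have h2 := (hWt x y hxy).2.2
      rw [hGdef x y hxy, h2]
      linarith
    · intro hpos
      by_contra hncxy
      have hcyx : c y x := by
        have hiff := hc.2 x y hxy
        by_contra h'
        exact hncxy (hiff.mpr h')
      have h1 := hdom y x hxy.symm hcyx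
      have h2 := (hWt y x hxy.symm).2.2
      rw [hGdef x y hxy] at hpos
      rw [h2] at hpos
      linarith
  -- the weighting over permutations
  set H : Perm X → ℝ := fun τ => ∑ s, ∑ t, G s t * aaT c0 (τ s) (τ t) with hH
  have hHbd : ∀ τ : Perm X, |H τ| ≤ (Fintype.card X : ℝ) * (Fintype.card X : ℝ) := by
    intro τ
    calc |H τ| ≤ ∑ s, |∑ t, G s t * aaT c0 (τ s) (τ t)| := by
          rw [hH]; exact Finset.abs_sum_le_sum_abs _ _
      _ ≤ ∑ s : X, ∑ t : X, |G s t * aaT c0 (τ s) (τ t)| := by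
          refine Finset.sum_le_sum (fun s _ => Finset.abs_sum_le_sum_abs _ _)
      _ ≤ ∑ _s : X, ∑ _t : X, (1:ℝ) := by
          refine Finset.sum_le_sum (fun s _ => Finset.sum_le_sum (fun t _ => ?_))
          rw [abs_mul]
          exact mul_le_one₀ (hGbd s t) (abs_nonneg _) (aaT_abs _ _)
      _ = (Fintype.card X : ℝ) * (Fintype.card X : ℝ) := by
          simp [Finset.sum_const, Finset.card_univ, nsmul_eq_mul]
  set M : ℝ := (Fintype.card X : ℝ) * (Fintype.card X : ℝ) with hM
  have hMpos : 0 < M := by rw [hM]; nlinarith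
  set eps : ℝ := 1/(2*M + 1) with heps
  have hepspos : 0 < eps := by rw [heps]; positivity
  set W : Perm X → ℝ := fun τ => (1 + eps * H τ)/nf with hW
  have hWnonneg : ∀ τ : Perm X, 0 ≤ W τ := by
    intro τ
    rw [hW]
    have h1 : |eps * H τ| ≤ eps * M := by
      rw [abs_mul, abs_of_pos hepspos]
      exact mul_le_mul_of_nonneg_left (hHbd τ) hepspos.le
    have h2 : eps * M ≤ 1/2 := by
      rw [heps]
      rw [div_mul_eq_mul_div, div_le_div_iff₀ (by linarith) (by norm_num)]
      linarith
    have h3 : -(1/2 : ℝ) ≤ eps * H τ := by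
      have := neg_abs_le (eps * H τ)
      linarith
    exact div_nonneg (by linarith) hnfpos.le
  have hsumH : ∑ τ : Perm X, H τ = 0 := by
    rw [hH]
    rw [Finset.sum_comm]
    refine Finset.sum_eq_zero (fun s _ => ?_)
    rw [Finset.sum_comm]
    refine Finset.sum_eq_zero (fun t _ => ?_)
    rw [← Finset.mul_sum]
    rcases eq_or_ne s t with rfl | hst
    · rw [Finset.sum_congr rfl (fun τ (_ : τ ∈ Finset.univ) => aaT_diag c0 (τ s)),
        Finset.sum_const, smul_zero, mul_zero]
    · rw [skew_sum_perm_zero (c0 := c0) hst, mul_zero]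
  have hWsum : ∑ τ : Perm X, W τ = 1 := by
    rw [hW]
    simp only []
    rw [← Finset.sum_div]
    rw [Finset.sum_add_distrib, ← Finset.mul_sum, hsumH, mul_zero, add_zero,
      Finset.sum_const, nsmul_eq_mul, mul_one, Finset.card_univ, Fintype.card_perm, ← hnf,
      div_self (ne_of_gt hnfpos)]
  -- margin formula
  have hNform : ∀ x y : X, x ≠ y → ∃ κ : ℝ, 0 < κ ∧
      ∑ τ : Perm X, (if c0 (τ x) (τ y) then W τ else 0) = 1/2 + κ * G x y := by
    intro x y hxy
    obtain ⟨K, hKpos, hKeq⟩ := R_formula hc0 hcard G hGskew hGrow hxy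
    have he : ∀ τ : Perm X, (if c0 (τ x) (τ y) then W τ else 0)
        = W τ * ((aaT c0 (τ x) (τ y) + 1)/2) := by
      intro τ
      have hne : τ x ≠ τ y := fun h => hxy (τ.injective h)
      by_cases hcc : c0 (τ x) (τ y)
      · have hncc : ¬ c0 (τ y) (τ x) := (hc0.2 _ _ hne).mp hcc
        rw [if_pos hcc, aaT]
        rw [if_pos hcc, if_neg hncc]
        ring
      · have hcc' : c0 (τ y) (τ x) := by
          by_contra h'
          exact hcc ((hc0.2 _ _ hne).mpr h')
        rw [if_neg hcc, aaT, if_neg hcc, if_pos hcc']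
        ring
    rw [Finset.sum_congr rfl (fun τ _ => he τ)]
    have hexp : ∀ τ : Perm X, W τ * ((aaT c0 (τ x) (τ y) + 1)/2)
        = (aaT c0 (τ x) (τ y) + eps * (H τ * aaT c0 (τ x) (τ y)))/(2*nf) + W τ / 2 := by
      intro τ
      rw [hW]
      field_simp
    rw [Finset.sum_congr rfl (fun τ _ => hexp τ), Finset.sum_add_distrib,
      ← Finset.sum_div, ← Finset.sum_div, Finset.sum_add_distrib, ← Finset.mul_sum,
      skew_sum_perm_zero (c0 := c0) hxy, hWsum]
    have hHK : ∑ τ : Perm X, H τ * aaT c0 (τ x) (τ y) = K * G x y := by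
      rw [hH]
      exact hKeq
    rw [hHK]
    refine ⟨eps * K / (2 * nf), by positivity, ?_⟩
    ring
  -- the weight function on tournaments
  set m : Perm X → (X → X → Prop) := fun τ => permAct τ⁻¹ c0 with hm
  have hmD : ∀ τ : Perm X, m τ ∈ D := fun τ => hsym τ⁻¹ c0 hc0D
  have hmxy : ∀ (τ : Perm X) (x y : X), m τ x y ↔ c0 (τ x) (τ y) := by
    intro τ x y
    rw [hm]
    simp only [permAct]
    rw [show (τ⁻¹ : Perm X).symm = τ from rfl]
  set w : (X → X → Prop) → ℝ :=
    fun d => ∑ τ ∈ Finset.univ.filter (fun τ => m τ = d), W τ with hw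
  set img : Finset (X → X → Prop) := Finset.univ.image m with himg
  have hw0 : ∀ d, d ∉ (img : Finset (X → X → Prop)) → w d = 0 := by
    intro d hd
    rw [hw]
    simp only []
    refine Finset.sum_eq_zero (fun τ hτ => ?_)
    exfalso
    rcases Finset.mem_filter.mp hτ with ⟨-, heqd⟩
    exact hd (himg ▸ Finset.mem_image.mpr ⟨τ, Finset.mem_univ τ, heqd⟩)
  have hwnonneg : ∀ d, 0 ≤ w d := by
    intro d
    rw [hw]
    exact Finset.sum_nonneg (fun τ _ => hWnonneg τ)
  have hsupp : Function.support w ⊆ (img : Set (X → X → Prop)) := by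
    intro d hd
    by_contra hnd
    exact hd (hw0 d (fun h => hnd (Finset.mem_coe.mpr h)))
  have hwimg : ∀ t : Finset (X → X → Prop),
      ∑ d ∈ t, w d = ∑ τ ∈ Finset.univ.filter (fun τ => m τ ∈ t), W τ := by
    intro t
    rw [hw]
    exact Finset.sum_fiberwise_eq_sum_filter _ _ _ _
  have hwtotal : ∑ d ∈ img, w d = 1 := by
    rw [hwimg img]
    rw [Finset.filter_true_of_mem (fun τ _ => himg ▸ Finset.mem_image.mpr
      ⟨τ, Finset.mem_univ τ, rfl⟩)]
    exact hWsum
  have hwle1 : ∀ d, w d ≤ 1 := by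
    intro d
    by_cases hd : d ∈ img
    · rw [← hwtotal]
      exact Finset.single_le_sum (fun d' _ => hwnonneg d') hd
    · rw [hw0 d hd]
      norm_num
  refine ⟨hc, w, fun d => ⟨hwnonneg d, hwle1 d⟩, ?_, ?_, ?_, ?_⟩
  · intro d hwd
    rcases Finset.mem_image.mp (Finset.mem_coe.mp (hsupp hwd)) with ⟨τ, -, hτ⟩
    rw [← hτ]
    exact hmD τ
  · exact Set.Finite.subset (img.finite_toSet) hsupp
  · rw [finsum_eq_sum_of_support_subset w hsupp]
    exact hwtotal
  · intro x y hxy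
    obtain ⟨κ, hκpos, hκeq⟩ := hNform x y hxy
    have hfin : ∑ᶠ d ∈ {c' : X → X → Prop | c' ∈ D ∧ c' x y}, w d
        = ∑ d ∈ img.filter (fun d => d ∈ D ∧ d x y), w d := by
      rw [finsum_mem_def]
      have hsupp2 : Function.support
          (Set.indicator {c' : X → X → Prop | c' ∈ D ∧ c' x y} w)
            ⊆ (img : Set (X → X → Prop)) := by
        intro d hd
        refine hsupp ?_
        intro hwz
        apply hd
        rw [Set.indicator_apply]
        split_ifs <;> simp [hwz]
      rw [finsum_eq_sum_of_support_subset _ hsupp2]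
      rw [Finset.sum_congr rfl
        (fun d _ => Set.indicator_apply {c' : X → X → Prop | c' ∈ D ∧ c' x y} w d)]
      rw [← Finset.sum_filter]
      refine Finset.sum_congr ?_ (fun _ _ => rfl)
      refine Finset.filter_congr (fun d _ => ?_)
      simp [Set.mem_setOf_eq]
    have hfib : ∑ d ∈ img.filter (fun d => d ∈ D ∧ d x y), w d
        = ∑ τ ∈ Finset.univ.filter (fun τ => c0 (τ x) (τ y)), W τ := by
      rw [hwimg]
      refine Finset.sum_congr ?_ (fun _ _ => rfl)
      refine Finset.filter_congr (fun τ _ => ?_)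
      constructor
      · intro hmem
        rcases Finset.mem_filter.mp hmem with ⟨-, -, hxy'⟩
        exact (hmxy τ x y).mp hxy'
      · intro hcc
        refine Finset.mem_filter.mpr ⟨himg ▸ Finset.mem_image.mpr
          ⟨τ, Finset.mem_univ τ, rfl⟩, hmD τ, (hmxy τ x y).mpr hcc⟩
    have hval : ∑ τ ∈ Finset.univ.filter (fun τ => c0 (τ x) (τ y)), W τ
        = 1/2 + κ * G x y := by
      rw [Finset.sum_filter]
      exact hκeq
    rw [hfin, hfib, hval]
    rw [hGpos x y hxy]
    constructor
    · intro hg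
      nlinarith
    · intro hg
      have hkg : 0 < κ * G x y := by linarith
      by_contra hng
      push_neg at hng
      nlinarith
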